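/- For real k > 0, if k/2 ≤ α₂ < α₁ < k then B(α₁, k - α₁) > B(α₂, k - α₂), where B is the Euler beta function. -/

import Mathlib

open MeasureTheory Set intervalIntegral Real

/-- The Euler beta function `B(x,y) = ∫₀¹ t^(x-1) (1-t)^(y-1) dt`. -/
noncomputable def betaFn (x y : ℝ) : ℝ :=
  ∫ t in (0:ℝ)..1, t ^ (x - 1) * (1 - t) ^ (y - 1)

lemma betaInt_left (x y : ℝ) (hx : 0 < x) :
    IntervalIntegrable (fun t : ℝ => t ^ (x - 1) * (1 - t) ^ (y - 1)) volume 0 (1/2) := by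
  apply IntervalIntegrable.mul_continuousOn
  · exact intervalIntegrable_rpow' (by linarith)
  · apply continuousOn_of_forall_continuousAt
    intro t ht
    rw [uIcc_of_le (by norm_num : (0:ℝ) ≤ 1/2)] at ht
    have h1 : (0:ℝ) < 1 - t := by have := ht.2; norm_num at this ⊢; linarith
    exact ((continuous_const.sub continuous_id).continuousAt).rpow_const (Or.inl h1.ne')

lemma betaInt (x y : ℝ) (hx : 0 < x) (hy : 0 < y) :
    IntervalIntegrable (fun t : ℝ => t ^ (x - 1) * (1 - t) ^ (y - 1)) volume 0 1 := by
  refine (betaInt_left x y hx).trans ?_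
  rw [IntervalIntegrable.iff_comp_neg]
  convert ((betaInt_left y x hy).comp_add_right 1).symm using 1
  · ext1 t
    conv_lhs => rw [mul_comm]
    congr 2 <;> ring
  · norm_num
  · norm_num

lemma betaFn_symm (x y : ℝ) : betaFn x y = betaFn y x := by
  unfold betaFn
  have := intervalIntegral.integral_comp_sub_left
    (a := (0:ℝ)) (b := 1) (fun t : ℝ => t ^ (y - 1) * (1 - t) ^ (x - 1)) 1
  simp only [sub_zero, sub_self] at this
  rw [← this]
  congr 1
  ext t
  rw [mul_comm]
  congr 2
  ring

lemma pt_eq (t a b x k lam mu : ℝ) (ht : 0 < t) (ht1 : t < 1)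
    (hsum : lam + mu = 1) (hx : x = lam * a + mu * b) :
    t ^ (x - 1) * (1 - t) ^ (k - x - 1) =
      (t ^ (a - 1) * (1 - t) ^ (k - a - 1)) ^ lam *
      (t ^ (b - 1) * (1 - t) ^ (k - b - 1)) ^ mu := by
  have ht' : (0:ℝ) < 1 - t := by linarith
  rw [Real.mul_rpow (by positivity) (by positivity),
      Real.mul_rpow (by positivity) (by positivity),
      ← Real.rpow_mul ht.le, ← Real.rpow_mul ht'.le,
      ← Real.rpow_mul ht.le, ← Real.rpow_mul ht'.le,
      mul_mul_mul_comm, ← Real.rpow_add ht, ← Real.rpow_add ht']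
  congr 1
  · congr 1; linear_combination hx + hsum
  · congr 1; linear_combination -hx - (k - 1) * hsum

lemma pt_lt (t a b x k lam mu : ℝ) (ht : 0 < t) (ht1 : t < 1/2) (hab : a < b)
    (hlam : 0 < lam) (hmu : 0 < mu)
    (hsum : lam + mu = 1) (hx : x = lam * a + mu * b) :
    t ^ (x - 1) * (1 - t) ^ (k - x - 1) <
      lam * (t ^ (a - 1) * (1 - t) ^ (k - a - 1)) +
      mu * (t ^ (b - 1) * (1 - t) ^ (k - b - 1)) := by
  have ht1' : t < 1 := by linarith
  have ht' : (0:ℝ) < 1 - t := by linarith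
  set p := t ^ (a - 1) * (1 - t) ^ (k - a - 1) with hp_def
  set q := t ^ (b - 1) * (1 - t) ^ (k - b - 1) with hq_def
  have hp : 0 < p := by positivity
  have hq : 0 < q := by positivity
  have hlogp : Real.log p = (a - 1) * Real.log t + (k - a - 1) * Real.log (1 - t) := by
    rw [hp_def, Real.log_mul (by positivity) (by positivity),
      Real.log_rpow ht, Real.log_rpow ht']
  have hlogq : Real.log q = (b - 1) * Real.log t + (k - b - 1) * Real.log (1 - t) := by
    rw [hq_def, Real.log_mul (by positivity) (by positivity),
      Real.log_rpow ht, Real.log_rpow ht']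
  have hlogtt : Real.log t < Real.log (1 - t) := Real.log_lt_log ht (by linarith)
  have hne : Real.log p ≠ Real.log q := by
    rw [hlogp, hlogq]
    intro hcon
    have : (a - b) * (Real.log t - Real.log (1 - t)) = 0 := by linear_combination hcon
    rcases mul_eq_zero.1 this with h | h
    · exact absurd h (by intro h'; linarith)
    · linarith
  have hstrict := strictConvexOn_exp.2 (Set.mem_univ (Real.log p)) (Set.mem_univ (Real.log q))
    hne hlam hmu hsum
  simp only [smul_eq_mul, Real.exp_log hp, Real.exp_log hq] at hstrict
  calc t ^ (x - 1) * (1 - t) ^ (k - x - 1) = p ^ lam * q ^ mu :=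
        pt_eq t a b x k lam mu ht ht1' hsum hx
    _ = Real.exp (lam * Real.log p + mu * Real.log q) := by
        rw [Real.exp_add, Real.rpow_def_of_pos hp, Real.rpow_def_of_pos hq,
          mul_comm (Real.log p) lam, mul_comm (Real.log q) mu]
    _ < lam * p + mu * q := hstrict

theorem beta_strict_mono_right_of_half (k α₁ α₂ : ℝ) (hk : 0 < k)
    (h1 : k / 2 ≤ α₂) (h2 : α₂ < α₁) (h3 : α₁ < k) :
    betaFn α₁ (k - α₁) > betaFn α₂ (k - α₂) := by
  set a : ℝ := k - α₁ with ha_def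
  have ha0 : 0 < a := by rw [ha_def]; linarith
  have hb0 : 0 < α₁ := by linarith
  have hax : a < α₂ := by rw [ha_def]; linarith
  have hx0 : 0 < α₂ := by linarith
  have hkx : 0 < k - α₂ := by linarith
  have hd : 0 < α₁ - a := by linarith
  set lam : ℝ := (α₁ - α₂) / (α₁ - a) with hlam_def
  set mu : ℝ := (α₂ - a) / (α₁ - a) with hmu_def
  have hlam : 0 < lam := div_pos (by linarith) hd
  have hmu : 0 < mu := div_pos (by linarith) hd
  have hsum : lam + mu = 1 := by
    rw [hlam_def, hmu_def, ← add_div, div_eq_one_iff_eq hd.ne']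
    ring
  have hxeq : α₂ = lam * a + mu * α₁ := by
    rw [hlam_def, hmu_def]
    field_simp
    ring
  -- the three integrands
  set g : ℝ → ℝ := fun t => t ^ (α₂ - 1) * (1 - t) ^ (k - α₂ - 1) with hg_def
  set p : ℝ → ℝ := fun t => t ^ (a - 1) * (1 - t) ^ (k - a - 1) with hp_def
  set q : ℝ → ℝ := fun t => t ^ (α₁ - 1) * (1 - t) ^ (k - α₁ - 1) with hq_def
  have hka : k - a = α₁ := by simp [ha_def]
  have hgi : IntervalIntegrable g volume 0 1 := betaInt _ _ hx0 hkx
  have hpi : IntervalIntegrable p volume 0 1 := by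
    have := betaInt a (k - a) ha0 (by rw [hka]; exact hb0)
    simpa using this
  have hqi : IntervalIntegrable q volume 0 1 := betaInt _ _ hb0 (by linarith)
  set h : ℝ → ℝ := fun t => lam * p t + mu * q t with hh_def
  have hhi : IntervalIntegrable h volume 0 1 :=
    (hpi.const_mul lam).add (hqi.const_mul mu)
  -- a.e. inequality
  have hle : (fun t => g t) ≤ᵐ[volume.restrict (Ioc (0:ℝ) 1)] fun t => h t := by
    have h1' : ∀ᵐ t ∂volume.restrict (Ioc (0:ℝ) 1), t ∈ Ioc (0:ℝ) 1 :=
      ae_restrict_mem measurableSet_Ioc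
    have h2' : ∀ᵐ t ∂volume.restrict (Ioc (0:ℝ) 1), t ≠ 1 := by
      refine (ae_restrict_iff' measurableSet_Ioc).2 ?_
      have : ∀ᵐ t : ℝ ∂volume, t ≠ 1 := by
        refine compl_mem_ae_iff.2 (measure_mono_null ?_ (Real.volume_singleton (a := 1)))
        intro t ht
        exact ht
      filter_upwards [this] with t ht _ using ht
    filter_upwards [h1', h2'] with t ht hne
    have ht0 : 0 < t := ht.1
    have ht1 : t < 1 := lt_of_le_of_ne ht.2 hne
    have hppos : (0:ℝ) ≤ p t := by
      have : (0:ℝ) < 1 - t := by linarith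
      positivity
    have hqpos : (0:ℝ) ≤ q t := by
      have : (0:ℝ) < 1 - t := by linarith
      positivity
    calc g t = p t ^ lam * q t ^ mu := pt_eq t a α₁ α₂ k lam mu ht0 ht1 hsum hxeq
      _ ≤ lam * p t + mu * q t :=
          Real.geom_mean_le_arith_mean2_weighted hlam.le hmu.le hppos hqpos hsum
  -- strict on a set of positive measure
  have hltset : volume.restrict (Ioc (0:ℝ) 1) {t | g t < h t} ≠ 0 := by
    intro hcon
    have hsub : Ioo (0:ℝ) (1/2) ⊆ {t | g t < h t} ∩ Ioc (0:ℝ) 1 := by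
      rintro t ⟨ht0, ht12⟩
      refine ⟨pt_lt t a α₁ α₂ k lam mu ht0 ht12 (by linarith) hlam hmu hsum hxeq,
        ht0, by linarith⟩
    have hlb := measure_mono (μ := volume) hsub
    rw [← Measure.restrict_apply' measurableSet_Ioc, hcon] at hlb
    simp only [Measure.coe_zero, Pi.zero_apply, nonpos_iff_eq_zero] at hlb
    rw [Real.volume_Ioo] at hlb
    norm_num at hlb
  have hmain := intervalIntegral.integral_lt_integral_of_ae_le_of_measure_setOf_lt_ne_zero
    (by norm_num : (0:ℝ) ≤ 1) hgi hhi hle hltset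
  have hIp : (∫ t in (0:ℝ)..1, p t) = betaFn α₁ (k - α₁) := by
    rw [show betaFn α₁ (k - α₁) = betaFn a (k - a) from (betaFn_symm _ _).trans (by rw [hka])]
    rfl
  have hIq : (∫ t in (0:ℝ)..1, q t) = betaFn α₁ (k - α₁) := rfl
  have hIh : (∫ t in (0:ℝ)..1, h t) = betaFn α₁ (k - α₁) := by
    rw [hh_def]
    rw [intervalIntegral.integral_add (hpi.const_mul lam) (hqi.const_mul mu),
      intervalIntegral.integral_const_mul, intervalIntegral.integral_const_mul, hIp, hIq]
    linear_combination betaFn α₁ (k - α₁) * hsum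
  have hIg : (∫ t in (0:ℝ)..1, g t) = betaFn α₂ (k - α₂) := rfl
  rw [hIg, hIh] at hmain
  exact hmain
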